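/- Ordered partition value formula: Let X₁,…,Xₙ be independent three-point variables on {0,mᵢ,1} with P(Xᵢ=1)=qᵢ, P(Xᵢ=mᵢ)=pᵢ, and suppose E[Xᵢ|Xᵢ>0] = c for all i (same constant c). For a partition (S,T) of the indices, the expected reward of the policy that accepts variables in S only at value 1 (in any order) and then accepts variables in T at any positive value (in any order) equals 1 − ∏_{i∈S}(1−qᵢ) + (∏_{i∈S}(1−qᵢ))·(1 − ∏_{j∈T}(1−pⱼ−qⱼ))·c. -/

import Mathlib

open MeasureTheory ProbabilityTheory
open scoped Classical

/-- The reward collected from a sequence of variables each of which is accepted at any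
positive value: the realized value of the first variable with a positive realization. -/
noncomputable def firstPos {Ω : Type*} : List (Ω → ℝ) → Ω → ℝ
  | [], _ => 0
  | X :: rest, ω => if 0 < X ω then X ω else firstPos rest ω

namespace Stmt14Aux

/-- `firstPos` as a function of the vector of values. -/
noncomputable def fpV {n : ℕ} : List (Fin n) → (Fin n → ℝ) → ℝ
  | [], _ => 0
  | j :: rest, v => if 0 < v j then v j else fpV rest v

/-- The full reward as a function of the vector of values. -/
noncomputable def hFun {n : ℕ} (S T : List (Fin n)) (v : Fin n → ℝ) : ℝ :=
  if ∃ i ∈ S, v i = 1 then 1 else fpV T v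

lemma firstPos_map {Ω : Type*} {n : ℕ} (X : Fin n → Ω → ℝ) (T : List (Fin n)) (ω : Ω) :
    firstPos (T.map X) ω = fpV T (fun j => X j ω) := by
  induction T with
  | nil => rfl
  | cons j T ih => simp only [List.map_cons, firstPos, fpV, ih]

lemma fpV_congr {n : ℕ} (T : List (Fin n)) {v w : Fin n → ℝ}
    (h : ∀ j ∈ T, v j = w j) : fpV T v = fpV T w := by
  induction T with
  | nil => rfl
  | cons j T ih =>
    simp only [fpV, h j (List.mem_cons_self)]
    rw [ih fun k hk => h k (List.mem_cons_of_mem _ hk)]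

lemma hFun_nil {n : ℕ} (T : List (Fin n)) (v : Fin n → ℝ) : hFun [] T v = fpV T v := by
  simp [hFun]

lemma hFun_cons {n : ℕ} (i : Fin n) (S T : List (Fin n)) (v : Fin n → ℝ) :
    hFun (i :: S) T v = if v i = 1 then 1 else hFun S T v := by
  by_cases h : v i = 1
  · rw [if_pos h, hFun, if_pos ⟨i, List.mem_cons_self, h⟩]
  · rw [if_neg h]
    unfold hFun
    have hiff : (∃ j ∈ i :: S, v j = 1) ↔ (∃ j ∈ S, v j = 1) := by
      constructor
      · rintro ⟨j, hj, hvj⟩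
        rcases List.mem_cons.1 hj with rfl | hj
        · exact absurd hvj h
        · exact ⟨j, hj, hvj⟩
      · rintro ⟨j, hj, hvj⟩
        exact ⟨j, List.mem_cons_of_mem _ hj, hvj⟩
    simp only [hiff]

lemma hFun_congr {n : ℕ} (S T : List (Fin n)) {v w : Fin n → ℝ}
    (h : ∀ j ∈ S ++ T, v j = w j) : hFun S T v = hFun S T w := by
  have h1 : ∀ j ∈ S, v j = w j := fun j hj => h j (List.mem_append_left _ hj)
  have h2 : ∀ j ∈ T, v j = w j := fun j hj => h j (List.mem_append_right _ hj)
  unfold hFun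
  rw [fpV_congr T h2]
  have hiff : (∃ i ∈ S, v i = 1) ↔ (∃ i ∈ S, w i = 1) := by
    constructor
    · rintro ⟨i, hi, hvi⟩; exact ⟨i, hi, (h1 i hi).symm.trans hvi⟩
    · rintro ⟨i, hi, hwi⟩; exact ⟨i, hi, (h1 i hi).trans hwi⟩
  simp only [hiff]

lemma measurable_fpV {n : ℕ} (T : List (Fin n)) : Measurable (fpV T) := by
  induction T with
  | nil => exact measurable_const
  | cons j T ih =>
    have hs : MeasurableSet {v : Fin n → ℝ | 0 < v j} :=
      measurableSet_lt measurable_const (measurable_pi_apply j)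
    exact Measurable.ite hs (measurable_pi_apply j) ih

lemma measurable_hFun {n : ℕ} (S T : List (Fin n)) : Measurable (hFun S T) := by
  induction S with
  | nil =>
    have : hFun ([] : List (Fin n)) T = fpV T := funext (hFun_nil T)
    rw [this]; exact measurable_fpV T
  | cons i S ih =>
    have : hFun (i :: S) T = fun v => if v i = 1 then 1 else hFun S T v :=
      funext (hFun_cons i S T)
    rw [this]
    exact Measurable.ite ((measurable_pi_apply i) (measurableSet_singleton 1))
      measurable_const ih

lemma fpV_bound {n : ℕ} (T : List (Fin n)) {v : Fin n → ℝ}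
    (hv : ∀ j, 0 ≤ v j ∧ v j ≤ 1) : 0 ≤ fpV T v ∧ fpV T v ≤ 1 := by
  induction T with
  | nil => exact ⟨le_refl 0, zero_le_one⟩
  | cons j T ih =>
    unfold fpV
    by_cases h : 0 < v j
    · rw [if_pos h]; exact ⟨(hv j).1, (hv j).2⟩
    · rw [if_neg h]; exact ih

lemma hFun_bound {n : ℕ} (S T : List (Fin n)) {v : Fin n → ℝ}
    (hv : ∀ j, 0 ≤ v j ∧ v j ≤ 1) : 0 ≤ hFun S T v ∧ hFun S T v ≤ 1 := by
  unfold hFun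
  by_cases h : ∃ i ∈ S, v i = 1
  · rw [if_pos h]; exact ⟨zero_le_one, le_refl 1⟩
  · rw [if_neg h]; exact fpV_bound T hv

section Prob

variable {Ω : Type*} [MeasurableSpace Ω] {μ : Measure Ω} [IsProbabilityMeasure μ]
  {n : ℕ} {X : Fin n → Ω → ℝ}

/-- Key independence lemma: `X i` is independent of any function of the coordinates in `L`,
provided `i ∉ L`. -/
lemma indep_key (hmeas : ∀ i, Measurable (X i))
    (hindep : iIndepFun X μ)
    (i : Fin n) (L : List (Fin n)) (hi : i ∉ L)
    (g : (Fin n → ℝ) → ℝ) (hg : Measurable g)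
    (hgc : ∀ v w : Fin n → ℝ, (∀ j ∈ L, v j = w j) → g v = g w) :
    IndepFun (X i) (fun ω => g (fun j => X j ω)) μ := by
  have hdisj : Disjoint ({i} : Finset (Fin n)) L.toFinset := by
    simp only [Finset.disjoint_left, Finset.mem_singleton, List.mem_toFinset]
    rintro a rfl
    exact hi
  have H := hindep.indepFun_finset {i} L.toFinset hdisj hmeas
  let φ : (({i} : Finset (Fin n)) → ℝ) → ℝ := fun u => u ⟨i, Finset.mem_singleton_self i⟩
  let ψ : ({x // x ∈ L.toFinset} → ℝ) → ℝ :=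
    fun u => g (fun j => if h : j ∈ L.toFinset then u ⟨j, h⟩ else 0)
  have hφ : Measurable φ := measurable_pi_apply _
  have hψ : Measurable ψ := by
    apply hg.comp
    apply measurable_pi_lambda
    intro j
    by_cases h : j ∈ L.toFinset
    · simp only [dif_pos h]
      exact measurable_pi_apply _
    · simp only [dif_neg h]
      exact measurable_const
  have key := H.comp hφ hψ
  have e1 : (φ ∘ fun a (k : ({i} : Finset (Fin n))) => X k a) = X i := rfl
  have e2 : (ψ ∘ fun a (k : {x // x ∈ L.toFinset}) => X k a) =
      fun ω => g (fun j => X j ω) := by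
    funext ω
    exact hgc _ _ (fun j hj => by simp [List.mem_toFinset.2 hj])
  rwa [e1, e2] at key

lemma values_bound {m : Fin n → ℝ} (hm : ∀ i, m i ∈ Set.Ioo (0 : ℝ) 1)
    (hval : ∀ i ω, X i ω = 0 ∨ X i ω = m i ∨ X i ω = 1) (ω : Ω) (j : Fin n) :
    0 ≤ X j ω ∧ X j ω ≤ 1 := by
  rcases hval j ω with h | h | h <;> rw [h]
  · exact ⟨le_refl 0, zero_le_one⟩
  · exact ⟨le_of_lt (hm j).1, le_of_lt (hm j).2⟩
  · exact ⟨zero_le_one, le_refl 1⟩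

lemma integrable_of_bound {f : Ω → ℝ} (hf : Measurable f) (C : ℝ)
    (h : ∀ ω, |f ω| ≤ C) : Integrable f μ :=
  ⟨hf.aestronglyMeasurable, HasFiniteIntegral.of_bounded (ae_of_all μ h)⟩

lemma integral_indicator_eq {s : Set Ω} (hs : MeasurableSet s) :
    (∫ ω, (if ω ∈ s then (1 : ℝ) else 0) ∂μ) = (μ s).toReal := by
  have : (fun ω => if ω ∈ s then (1 : ℝ) else 0) = s.indicator (fun _ => 1) := by
    funext ω; simp [Set.indicator]
  rw [this, integral_indicator hs]
  simp [measureReal_def]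

lemma measure_zero_set {m p q : Fin n → ℝ}
    (hm : ∀ i, m i ∈ Set.Ioo (0 : ℝ) 1)
    (hp : ∀ i, 0 < p i) (hq : ∀ i, 0 < q i) (hpq : ∀ i, p i + q i < 1)
    (hmeas : ∀ i, Measurable (X i))
    (hval : ∀ i ω, X i ω = 0 ∨ X i ω = m i ∨ X i ω = 1)
    (hP1 : ∀ i, μ {ω | X i ω = 1} = ENNReal.ofReal (q i))
    (hPm : ∀ i, μ {ω | X i ω = m i} = ENNReal.ofReal (p i)) (j : Fin n) :
    μ {ω | X j ω = 0} = ENNReal.ofReal (1 - p j - q j) := by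
  have hA0 : MeasurableSet {ω | X j ω = 0} := (hmeas j) (measurableSet_singleton 0)
  have hAm : MeasurableSet {ω | X j ω = m j} := (hmeas j) (measurableSet_singleton (m j))
  have hA1 : MeasurableSet {ω | X j ω = 1} := (hmeas j) (measurableSet_singleton 1)
  have hm0 : m j ≠ 0 := ne_of_gt (hm j).1
  have hm1 : m j ≠ 1 := ne_of_lt (hm j).2
  have hcover : ({ω | X j ω = 0} ∪ {ω | X j ω = m j}) ∪ {ω | X j ω = 1} = Set.univ := by
    ext ω
    simp only [Set.mem_union, Set.mem_setOf_eq, Set.mem_univ, iff_true]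
    rcases hval j ω with h | h | h
    · exact Or.inl (Or.inl h)
    · exact Or.inl (Or.inr h)
    · exact Or.inr h
  have hd1 : Disjoint {ω | X j ω = 0} {ω | X j ω = m j} := by
    rw [Set.disjoint_left]
    intro ω h0 hmω
    exact hm0 ((h0.symm.trans hmω)).symm
  have hd2 : Disjoint ({ω | X j ω = 0} ∪ {ω | X j ω = m j}) {ω | X j ω = 1} := by
    rw [Set.disjoint_left]
    rintro ω (h | h) h1
    · exact one_ne_zero ((h1.symm.trans h))
    · exact hm1 ((h1.symm.trans h)).symm
  have hsum : μ {ω | X j ω = 0} + ENNReal.ofReal (p j) + ENNReal.ofReal (q j) = 1 := by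
    rw [← hPm j, ← hP1 j, ← measure_union hd1 hAm, ← measure_union hd2 hA1, hcover,
      measure_univ]
  have hsum' : ENNReal.ofReal (1 - p j - q j) + ENNReal.ofReal (p j) + ENNReal.ofReal (q j)
      = 1 := by
    rw [← ENNReal.ofReal_add (by linarith [hpq j, hp j, hq j]) (le_of_lt (hp j)),
      ← ENNReal.ofReal_add (by linarith [hpq j, hp j, hq j]) (le_of_lt (hq j))]
    rw [show 1 - p j - q j + p j + q j = 1 by ring, ENNReal.ofReal_one]
  have hfin1 : ENNReal.ofReal (q j) ≠ ⊤ := ENNReal.ofReal_ne_top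
  have hfin2 : ENNReal.ofReal (p j) ≠ ⊤ := ENNReal.ofReal_ne_top
  have := hsum.trans hsum'.symm
  rwa [ENNReal.add_left_inj hfin1, ENNReal.add_left_inj hfin2] at this


lemma fp_integral {m p q : Fin n → ℝ} {c : ℝ}
    (hmeas : ∀ i, Measurable (X i))
    (hindep : iIndepFun X μ)
    (hm : ∀ i, m i ∈ Set.Ioo (0 : ℝ) 1)
    (hp : ∀ i, 0 < p i) (hq : ∀ i, 0 < q i) (hpq : ∀ i, p i + q i < 1)
    (hval : ∀ i ω, X i ω = 0 ∨ X i ω = m i ∨ X i ω = 1)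
    (hP1 : ∀ i, μ {ω | X i ω = 1} = ENNReal.ofReal (q i))
    (hPm : ∀ i, μ {ω | X i ω = m i} = ENNReal.ofReal (p i))
    (hc : ∀ i, (m i * p i + q i) / (p i + q i) = c)
    (T : List (Fin n)) (hnd : T.Nodup) :
    (∫ ω, fpV T (fun j => X j ω) ∂μ) = (1 - ∏ j ∈ T.toFinset, (1 - p j - q j)) * c := by
  induction T with
  | nil => simp [fpV]
  | cons j T ih =>
    rw [List.nodup_cons] at hnd
    obtain ⟨hjT, hndT⟩ := hnd
    have hvb := values_bound hm hval
    have hB : Measurable (fun ω => fpV T (fun k => X k ω)) :=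
      (measurable_fpV T).comp (measurable_pi_lambda _ hmeas)
    have hBb : ∀ ω, 0 ≤ fpV T (fun k => X k ω) ∧ fpV T (fun k => X k ω) ≤ 1 :=
      fun ω => fpV_bound T (fun k => hvb ω k)
    have hA0 : MeasurableSet {ω | X j ω = 0} := (hmeas j) (measurableSet_singleton 0)
    have hAm : MeasurableSet {ω | X j ω = m j} := (hmeas j) (measurableSet_singleton (m j))
    have hA1 : MeasurableSet {ω | X j ω = 1} := (hmeas j) (measurableSet_singleton 1)
    have hind0 : Measurable (fun ω => if X j ω = 0 then (1:ℝ) else 0) :=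
      Measurable.ite hA0 measurable_const measurable_const
    have hpt : ∀ ω, fpV (j :: T) (fun k => X k ω) =
        X j ω + (if X j ω = 0 then (1:ℝ) else 0) * fpV T (fun k => X k ω) := by
      intro ω
      show (if 0 < X j ω then X j ω else fpV T fun k => X k ω) = _
      rcases hval j ω with h | h | h
      · rw [if_neg (by rw [h]; exact lt_irrefl 0), if_pos h, h]; ring
      · rw [if_pos (by rw [h]; exact (hm j).1),
          if_neg (by rw [h]; exact ne_of_gt (hm j).1)]; ring
      · rw [if_pos (by rw [h]; exact one_pos),
          if_neg (by rw [h]; exact one_ne_zero)]; ring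
    have I1 : Integrable (X j) μ :=
      integrable_of_bound (hmeas j) 1
        (fun ω => abs_le.2 ⟨by linarith [(hvb ω j).1], (hvb ω j).2⟩)
    have I2 : Integrable (fun ω => (if X j ω = 0 then (1:ℝ) else 0) *
        fpV T (fun k => X k ω)) μ := by
      apply integrable_of_bound (hind0.mul hB) 1
      intro ω
      rw [Pi.mul_apply, abs_mul]
      calc |if X j ω = 0 then (1:ℝ) else 0| * |fpV T fun k => X k ω| ≤ 1 * 1 := by
            apply mul_le_mul
            · by_cases h : X j ω = 0 <;> simp [h]
            · exact abs_le.2 ⟨by linarith [(hBb ω).1], (hBb ω).2⟩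
            · exact abs_nonneg _
            · exact zero_le_one
        _ = 1 := by ring
    have step1 : (∫ ω, fpV (j :: T) (fun k => X k ω) ∂μ) =
        (∫ ω, X j ω ∂μ) + ∫ ω, (if X j ω = 0 then (1:ℝ) else 0) *
          fpV T (fun k => X k ω) ∂μ := by
      rw [integral_congr_ae (ae_of_all _ hpt), integral_add I1 I2]
    -- ∫ X j = m j * p j + q j
    have hXj : ∀ ω, X j ω = m j * (if X j ω = m j then (1:ℝ) else 0) +
        (if X j ω = 1 then (1:ℝ) else 0) := by
      intro ω
      rcases hval j ω with h | h | h <;> rw [h]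
      · rw [if_neg (fun hh => (ne_of_gt (hm j).1) hh.symm),
          if_neg (fun hh => one_ne_zero hh.symm)]; ring
      · rw [if_pos rfl, if_neg (ne_of_lt (hm j).2)]; ring
      · rw [if_neg (fun hh => (ne_of_lt (hm j).2) hh.symm), if_pos rfl]; ring
    have Iim : Integrable (fun ω => if X j ω = m j then (1:ℝ) else 0) μ :=
      integrable_of_bound (Measurable.ite hAm measurable_const measurable_const) 1
        (fun ω => by by_cases h : X j ω = m j <;> simp [h])
    have Ii1 : Integrable (fun ω => if X j ω = 1 then (1:ℝ) else 0) μ :=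
      integrable_of_bound (Measurable.ite hA1 measurable_const measurable_const) 1
        (fun ω => by by_cases h : X j ω = 1 <;> simp [h])
    have EXj : (∫ ω, X j ω ∂μ) = m j * p j + q j := by
      rw [integral_congr_ae (ae_of_all _ hXj), integral_add (Iim.const_mul _) Ii1,
        integral_const_mul]
      rw [show (∫ a, (if X j a = m j then (1:ℝ) else 0) ∂μ) = (μ {ω | X j ω = m j}).toReal
          from integral_indicator_eq hAm,
        show (∫ a, (if X j a = 1 then (1:ℝ) else 0) ∂μ) = (μ {ω | X j ω = 1}).toReal
          from integral_indicator_eq hA1, hPm j, hP1 j,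
        ENNReal.toReal_ofReal (le_of_lt (hp j)), ENNReal.toReal_ofReal (le_of_lt (hq j))]
    -- independence for the second term
    have hI : IndepFun (X j) (fun ω => fpV T (fun k => X k ω)) μ :=
      indep_key hmeas hindep j T hjT (fpV T) (measurable_fpV T)
        (fun v w h => fpV_congr T h)
    have hφm : Measurable (fun x : ℝ => if x = 0 then (1:ℝ) else 0) :=
      Measurable.ite (measurableSet_singleton 0) measurable_const measurable_const
    have hI2 := hI.comp hφm (measurable_id (α := ℝ))
    have prodE : (∫ ω, (if X j ω = 0 then (1:ℝ) else 0) * fpV T (fun k => X k ω) ∂μ) =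
        (∫ ω, (if X j ω = 0 then (1:ℝ) else 0) ∂μ) * ∫ ω, fpV T (fun k => X k ω) ∂μ := by
      have e : (fun ω => (if X j ω = 0 then (1:ℝ) else 0) * fpV T (fun k => X k ω)) =
          ((fun x : ℝ => if x = 0 then (1:ℝ) else 0) ∘ X j) *
            (id ∘ fun ω => fpV T (fun k => X k ω)) := rfl
      calc (∫ ω, (if X j ω = 0 then (1:ℝ) else 0) * fpV T (fun k => X k ω) ∂μ)
          = ∫ ω, (((fun x : ℝ => if x = 0 then (1:ℝ) else 0) ∘ X j) *
              (id ∘ fun ω => fpV T (fun k => X k ω))) ω ∂μ := by rw [← e]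
        _ = _ := by
            rw [hI2.integral_mul_eq_mul_integral (hind0.aestronglyMeasurable) hB.aestronglyMeasurable]
            rfl
    have E0 : (∫ ω, (if X j ω = 0 then (1:ℝ) else 0) ∂μ) = 1 - p j - q j := by
      rw [show (∫ ω, (if X j ω = 0 then (1:ℝ) else 0) ∂μ) = (μ {ω | X j ω = 0}).toReal
          from integral_indicator_eq hA0,
        measure_zero_set hm hp hq hpq hmeas hval hP1 hPm j,
        ENNReal.toReal_ofReal (by linarith [hpq j])]
    rw [step1, EXj, prodE, E0, ih hndT]
    have hjT' : j ∉ T.toFinset := fun h => hjT (List.mem_toFinset.1 h)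
    rw [List.toFinset_cons, Finset.prod_insert hjT']
    have hne : p j + q j ≠ 0 := ne_of_gt (by linarith [hp j, hq j])
    have hcj : m j * p j + q j = c * (p j + q j) := by
      have := hc j
      field_simp at this
      linarith [this]
    rw [hcj]; ring

lemma hFun_integral {m p q : Fin n → ℝ} {c : ℝ}
    (hmeas : ∀ i, Measurable (X i))
    (hindep : iIndepFun X μ)
    (hm : ∀ i, m i ∈ Set.Ioo (0 : ℝ) 1)
    (hp : ∀ i, 0 < p i) (hq : ∀ i, 0 < q i) (hpq : ∀ i, p i + q i < 1)
    (hval : ∀ i ω, X i ω = 0 ∨ X i ω = m i ∨ X i ω = 1)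
    (hP1 : ∀ i, μ {ω | X i ω = 1} = ENNReal.ofReal (q i))
    (hPm : ∀ i, μ {ω | X i ω = m i} = ENNReal.ofReal (p i))
    (hc : ∀ i, (m i * p i + q i) / (p i + q i) = c)
    (S T : List (Fin n)) (hnd : (S ++ T).Nodup) :
    (∫ ω, hFun S T (fun j => X j ω) ∂μ) =
      1 - ∏ i ∈ S.toFinset, (1 - q i) +
        (∏ i ∈ S.toFinset, (1 - q i)) * (1 - ∏ j ∈ T.toFinset, (1 - p j - q j)) * c := by
  induction S with
  | nil =>
    simp only [hFun_nil]
    rw [fp_integral hmeas hindep hm hp hq hpq hval hP1 hPm hc T hnd]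
    simp only [List.toFinset_nil, Finset.prod_empty]
    ring
  | cons i S ih =>
    rw [List.cons_append, List.nodup_cons] at hnd
    obtain ⟨hiST, hnd'⟩ := hnd
    have hiS : i ∉ S := fun h => hiST (List.mem_append_left _ h)
    have hvb := values_bound hm hval
    have hA1 : MeasurableSet {ω | X i ω = 1} := (hmeas i) (measurableSet_singleton 1)
    have hB : Measurable (fun ω => hFun S T (fun k => X k ω)) :=
      (measurable_hFun S T).comp (measurable_pi_lambda _ hmeas)
    have hBb : ∀ ω, 0 ≤ hFun S T (fun k => X k ω) ∧ hFun S T (fun k => X k ω) ≤ 1 :=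
      fun ω => hFun_bound S T (fun k => hvb ω k)
    have hindm : Measurable (fun ω => if X i ω = 1 then (0:ℝ) else 1) :=
      Measurable.ite hA1 measurable_const measurable_const
    have hpt : ∀ ω, hFun (i :: S) T (fun k => X k ω) =
        (if X i ω = 1 then (1:ℝ) else 0) +
          (if X i ω = 1 then (0:ℝ) else 1) * hFun S T (fun k => X k ω) := by
      intro ω
      rw [hFun_cons]
      by_cases h : X i ω = 1 <;> simp [h]
    have I1 : Integrable (fun ω => if X i ω = 1 then (1:ℝ) else 0) μ :=
      integrable_of_bound (Measurable.ite hA1 measurable_const measurable_const) 1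
        (fun ω => by by_cases h : X i ω = 1 <;> simp [h])
    have I2 : Integrable (fun ω => (if X i ω = 1 then (0:ℝ) else 1) *
        hFun S T (fun k => X k ω)) μ := by
      apply integrable_of_bound (hindm.mul hB) 1
      intro ω
      rw [Pi.mul_apply, abs_mul]
      calc |if X i ω = 1 then (0:ℝ) else 1| * |hFun S T fun k => X k ω| ≤ 1 * 1 := by
            apply mul_le_mul
            · by_cases h : X i ω = 1 <;> simp [h]
            · exact abs_le.2 ⟨by linarith [(hBb ω).1], (hBb ω).2⟩
            · exact abs_nonneg _
            · exact zero_le_one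
        _ = 1 := by ring
    have step1 : (∫ ω, hFun (i :: S) T (fun k => X k ω) ∂μ) =
        (∫ ω, (if X i ω = 1 then (1:ℝ) else 0) ∂μ) +
          ∫ ω, (if X i ω = 1 then (0:ℝ) else 1) * hFun S T (fun k => X k ω) ∂μ := by
      rw [integral_congr_ae (ae_of_all _ hpt), integral_add I1 I2]
    have E1 : (∫ ω, (if X i ω = 1 then (1:ℝ) else 0) ∂μ) = q i := by
      rw [show (∫ ω, (if X i ω = 1 then (1:ℝ) else 0) ∂μ) = (μ {ω | X i ω = 1}).toReal
          from integral_indicator_eq hA1, hP1 i, ENNReal.toReal_ofReal (le_of_lt (hq i))]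
    have E1' : (∫ ω, (if X i ω = 1 then (0:ℝ) else 1) ∂μ) = 1 - q i := by
      have e : (fun ω => if X i ω = 1 then (0:ℝ) else 1) =
          fun ω => 1 - (if X i ω = 1 then (1:ℝ) else 0) := by
        funext ω; by_cases h : X i ω = 1 <;> simp [h]
      rw [e, integral_sub (integrable_const 1) I1, integral_const, E1]
      simp
    have hI : IndepFun (X i) (fun ω => hFun S T (fun k => X k ω)) μ :=
      indep_key hmeas hindep i (S ++ T) hiST (hFun S T) (measurable_hFun S T)
        (fun v w h => hFun_congr S T h)
    have hφm : Measurable (fun x : ℝ => if x = 1 then (0:ℝ) else 1) :=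
      Measurable.ite (measurableSet_singleton 1) measurable_const measurable_const
    have hI2 := hI.comp hφm (measurable_id (α := ℝ))
    have prodE : (∫ ω, (if X i ω = 1 then (0:ℝ) else 1) * hFun S T (fun k => X k ω) ∂μ) =
        (∫ ω, (if X i ω = 1 then (0:ℝ) else 1) ∂μ) * ∫ ω, hFun S T (fun k => X k ω) ∂μ := by
      have e : (fun ω => (if X i ω = 1 then (0:ℝ) else 1) * hFun S T (fun k => X k ω)) =
          ((fun x : ℝ => if x = 1 then (0:ℝ) else 1) ∘ X i) *
            (id ∘ fun ω => hFun S T (fun k => X k ω)) := rfl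
      calc (∫ ω, (if X i ω = 1 then (0:ℝ) else 1) * hFun S T (fun k => X k ω) ∂μ)
          = ∫ ω, (((fun x : ℝ => if x = 1 then (0:ℝ) else 1) ∘ X i) *
              (id ∘ fun ω => hFun S T (fun k => X k ω))) ω ∂μ := by rw [← e]
        _ = _ := by
            rw [hI2.integral_mul_eq_mul_integral (hindm.aestronglyMeasurable) hB.aestronglyMeasurable]
            rfl
    rw [step1, E1, prodE, E1',
      ih hnd']
    have hiS' : i ∉ S.toFinset := fun h => hiS (List.mem_toFinset.1 h)
    rw [List.toFinset_cons, Finset.prod_insert hiS']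
    ring

end Prob

end Stmt14Aux

theorem stmt14 {Ω : Type*} [MeasurableSpace Ω] (μ : Measure Ω) [IsProbabilityMeasure μ]
    (n : ℕ) (X : Fin n → Ω → ℝ) (m p q : Fin n → ℝ) (c : ℝ)
    (hmeas : ∀ i, Measurable (X i))
    (hindep : iIndepFun X μ)
    (hm : ∀ i, m i ∈ Set.Ioo (0 : ℝ) 1)
    (hp : ∀ i, 0 < p i) (hq : ∀ i, 0 < q i) (hpq : ∀ i, p i + q i < 1)
    (hval : ∀ i ω, X i ω = 0 ∨ X i ω = m i ∨ X i ω = 1)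
    (hP1 : ∀ i, μ {ω | X i ω = 1} = ENNReal.ofReal (q i))
    (hPm : ∀ i, μ {ω | X i ω = m i} = ENNReal.ofReal (p i))
    (hc : ∀ i, (m i * p i + q i) / (p i + q i) = c)
    (S T : List (Fin n)) (hpart : (S ++ T).Perm (List.finRange n)) :
    (∫ ω, (if ∃ i ∈ S, X i ω = 1 then (1 : ℝ) else firstPos (T.map X) ω) ∂μ) =
      1 - ∏ i ∈ S.toFinset, (1 - q i) +
        (∏ i ∈ S.toFinset, (1 - q i)) * (1 - ∏ j ∈ T.toFinset, (1 - p j - q j)) * c := by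
  have hnd : (S ++ T).Nodup := (hpart.nodup_iff).2 (List.nodup_finRange n)
  have key := Stmt14Aux.hFun_integral hmeas hindep hm hp hq hpq hval hP1 hPm hc S T hnd
  rw [← key]
  apply integral_congr_ae (ae_of_all _ _)
  intro ω
  simp only [Stmt14Aux.hFun, Stmt14Aux.firstPos_map]
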